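/- Let q_1, q_2, … : 𝒳 → [0,1] be a sequence of queries and S = (X_1,…,X_n). For each t, let S_t = {X_i ∈ S : Σ_{j=1}^t q_j(X_i)² ≤ 2Bσ²/α}, and report a_t = Σ_{X_i∈S_t} q_t(X_i) + ξ_t with ξ_t ~ N(0,σ²) independent. Then the whole sequence of reports (a_1, a_2, …) is (α,B)-Rényi differentially private. -/

import Mathlib

open MeasureTheory ProbabilityTheory Real

/-- Rényi divergence of order `α`. -/
noncomputable def renyiDiv {Ω : Type*} [MeasurableSpace Ω] (α : ℝ) (μ ν : Measure Ω) : ℝ :=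
  (α - 1)⁻¹ * Real.log (∫ x, ((μ.rnDeriv ν) x).toReal ^ α ∂ν)

open Classical in
/-- Mean of round `t`'s report when the dataset consists of the points `S i`, `i ∈ I`:
the sum of `q_t` over the points of `I` that are still active at round `t`
(those with `Σ_{j≤t} q_j(X_i)² ≤ 2Bσ²/α`). -/
noncomputable def filteredMean {𝒳 : Type*} {n : ℕ} (S : Fin n → 𝒳) (q : ℕ → 𝒳 → ℝ)
    (B α : ℝ) (σ : NNReal) (I : Finset (Fin n)) (t : ℕ) : ℝ :=
  ∑ i ∈ I.filter (fun i => ∑ j ∈ Finset.range (t + 1), (q j (S i)) ^ 2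
      ≤ 2 * B * (σ : ℝ) ^ 2 / α), q t (S i)

/-- Joint law of the first `k` reports `a_t = Σ_{X_i ∈ S_t} q_t(X_i) + ξ_t`,
`ξ_t ~ N(0,σ²)` independent, on the dataset indexed by `I`. -/
noncomputable def filteredLaw {𝒳 : Type*} {n : ℕ} (S : Fin n → 𝒳) (q : ℕ → 𝒳 → ℝ)
    (B α : ℝ) (σ : NNReal) (I : Finset (Fin n)) (k : ℕ) : Measure (Fin k → ℝ) :=
  Measure.map (fun ξ t => filteredMean S q B α σ I (t : Fin k) + ξ t)
    (Measure.pi fun _ : Fin k => gaussianReal 0 (σ ^ 2))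

open ENNReal NNReal

lemma my_lintegral_pi_prod {n : ℕ} (μ : Fin n → Measure ℝ) [∀ i, SigmaFinite (μ i)]
    (f : Fin n → ℝ → ℝ≥0∞) (hf : ∀ i, Measurable (f i)) :
    ∫⁻ x : Fin n → ℝ, ∏ i, f i (x i) ∂Measure.pi μ = ∏ i, ∫⁻ x, f i x ∂μ i := by
  induction n with
  | zero => simp [Measure.pi_of_empty]
  | succ n ih =>
    have h := (measurePreserving_piFinSuccAbove μ 0).symm
    have hg : Measurable fun x : Fin (n+1) → ℝ => ∏ i, f i (x i) :=
      Finset.measurable_prod _ fun i _ => (hf i).comp (measurable_pi_apply i)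
    rw [← MeasurePreserving.lintegral_comp h hg]
    simp_rw [MeasurableEquiv.piFinSuccAbove_symm_apply, Fin.insertNthEquiv,
      Fin.prod_univ_succ, Fin.insertNth_zero]
    simp only [Fin.zero_succAbove, Function.comp_def, Fin.cons_zero, Fin.cons_succ,
      Equiv.coe_fn_mk, cast_eq]
    rw [lintegral_prod_mul (f := f 0) (g := fun y : Fin n → ℝ => ∏ i, f i.succ (y i))
      ((hf 0).aemeasurable)
      ((Finset.measurable_prod _ fun i _ => (hf i.succ).comp (measurable_pi_apply i)).aemeasurable)]
    rw [ih (fun i => μ i.succ) (fun i => f i.succ) (fun i => hf i.succ)]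

lemma my_integral_pi_prod {n : ℕ} (μ : Fin n → Measure ℝ) [∀ i, SigmaFinite (μ i)]
    (f : Fin n → ℝ → ℝ) :
    ∫ x : Fin n → ℝ, ∏ i, f i (x i) ∂Measure.pi μ = ∏ i, ∫ x, f i x ∂μ i := by
  induction n with
  | zero => simp [Measure.pi_of_empty (μ := μ) (x := Fin.elim0)]
  | succ n ih =>
    have h := (measurePreserving_piFinSuccAbove μ 0).symm
    rw [← MeasurePreserving.integral_comp' h]
    simp_rw [MeasurableEquiv.piFinSuccAbove_symm_apply, Fin.insertNthEquiv,
      Fin.prod_univ_succ, Fin.insertNth_zero]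
    simp only [Fin.zero_succAbove, Function.comp_def, Fin.cons_zero, Fin.cons_succ,
      Equiv.coe_fn_mk, cast_eq]
    rw [integral_prod_mul (f := f 0) (g := fun y : Fin n → ℝ => ∏ i, f i.succ (y i))]
    rw [ih (fun i => μ i.succ) (fun i => f i.succ)]

lemma my_pi_withDensity {n : ℕ} (μ : Fin n → Measure ℝ) [∀ i, SigmaFinite (μ i)]
    (d : Fin n → ℝ → ℝ≥0∞) (hd : ∀ i, Measurable (d i))
    [∀ i, SigmaFinite ((μ i).withDensity (d i))] :
    Measure.pi (fun i => (μ i).withDensity (d i))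
      = (Measure.pi μ).withDensity (fun x => ∏ i, d i (x i)) := by
  refine Measure.pi_eq fun s hs => ?_
  rw [withDensity_apply _ (MeasurableSet.univ_pi hs), ← lintegral_indicator
    (MeasurableSet.univ_pi hs)]
  have hind : (Set.univ.pi s).indicator (fun x => ∏ i, d i (x i))
      = fun x => ∏ i, (s i).indicator (d i) (x i) := by
    ext x
    by_cases hx : x ∈ Set.univ.pi s
    · rw [Set.indicator_of_mem hx]
      refine Finset.prod_congr rfl fun i _ => ?_
      rw [Set.indicator_of_mem (hx i (Set.mem_univ i))]
    · rw [Set.indicator_of_notMem hx]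
      simp only [Set.mem_pi, Set.mem_univ, forall_true_left, not_forall] at hx
      obtain ⟨i, hi⟩ := hx
      exact (Finset.prod_eq_zero (Finset.mem_univ i)
        (by rw [Set.indicator_of_notMem hi])).symm
  rw [hind, my_lintegral_pi_prod μ _ (fun i => (hd i).indicator (hs i))]
  exact Finset.prod_congr rfl fun i _ => by
    rw [lintegral_indicator (hs i), withDensity_apply _ (hs i)]

/-- The likelihood ratio between two Gaussians of the same variance. -/
noncomputable def gaussRatio (m m' : ℝ) (v : ℝ≥0) (x : ℝ) : ℝ≥0∞ :=
  ENNReal.ofReal (gaussianPDFReal m v x / gaussianPDFReal m' v x)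

lemma measurable_gaussRatio (m m' : ℝ) (v : ℝ≥0) : Measurable (gaussRatio m m' v) :=
  ((measurable_gaussianPDFReal m v).div (measurable_gaussianPDFReal m' v)).ennreal_ofReal

lemma gaussReal_withDensity_ratio (m m' : ℝ) {v : ℝ≥0} (hv : v ≠ 0) :
    (gaussianReal m' v).withDensity (gaussRatio m m' v) = gaussianReal m v := by
  rw [gaussianReal_of_var_ne_zero _ hv, gaussianReal_of_var_ne_zero _ hv,
    ← withDensity_mul volume (measurable_gaussianPDF m' v) (measurable_gaussRatio m m' v)]
  congr 1
  funext x
  have h' : 0 < gaussianPDFReal m' v x := gaussianPDFReal_pos _ _ _ hv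
  simp only [Pi.mul_apply, gaussianPDF, gaussRatio,
    ← ENNReal.ofReal_mul (gaussianPDFReal_nonneg m' v x)]
  rw [mul_div_cancel₀ _ h'.ne']

lemma pointwise_ratio_pow (m m' : ℝ) {v : ℝ≥0} (hv : v ≠ 0) (α : ℝ) (x : ℝ) :
    gaussianPDFReal m' v x * (gaussianPDFReal m v x / gaussianPDFReal m' v x) ^ α
      = rexp (α * (α - 1) * (m - m') ^ 2 / (2 * v)) *
        gaussianPDFReal (m' + α * (m - m')) v x := by
  have hvpos : (0:ℝ) < (v:ℝ) := by positivity
  have hc : (0:ℝ) < (√(2 * π * v))⁻¹ := by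
    rw [inv_pos]
    exact Real.sqrt_pos.mpr (by positivity)
  rw [gaussianPDFReal, gaussianPDFReal, gaussianPDFReal]
  rw [mul_div_mul_left _ _ hc.ne', ← Real.exp_sub, ← Real.exp_mul]
  rw [mul_assoc, ← Real.exp_add, mul_comm (rexp _), mul_assoc _ (rexp _) (rexp _), ← Real.exp_add]
  congr 1
  field_simp
  ring

lemma one_dim_integral (m m' : ℝ) {v : ℝ≥0} (hv : v ≠ 0) (α : ℝ) :
    ∫ x, ((gaussRatio m m' v x).toReal) ^ α ∂(gaussianReal m' v)
      = rexp (α * (α - 1) * (m - m') ^ 2 / (2 * v)) := by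
  rw [gaussianReal_of_var_ne_zero _ hv]
  have hd : gaussianPDF m' v = fun x => ((gaussianPDFReal m' v x).toNNReal : ℝ≥0∞) := by
    funext x; rw [gaussianPDF, ENNReal.ofReal]
  rw [hd, integral_withDensity_eq_integral_smul
    (measurable_gaussianPDFReal m' v).real_toNNReal]
  have hpt : ∀ x, (gaussianPDFReal m' v x).toNNReal • ((gaussRatio m m' v x).toReal ^ α)
      = rexp (α * (α - 1) * (m - m') ^ 2 / (2 * v))
          * gaussianPDFReal (m' + α * (m - m')) v x := by
    intro x
    rw [NNReal.smul_def, Real.coe_toNNReal _ (gaussianPDFReal_nonneg m' v x), smul_eq_mul,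
      gaussRatio, ENNReal.toReal_ofReal
        (div_nonneg (gaussianPDFReal_nonneg m v x) (gaussianPDFReal_nonneg m' v x))]
    exact pointwise_ratio_pow m m' hv α x
  rw [integral_congr_ae (Filter.Eventually.of_forall hpt), integral_const_mul,
    integral_gaussianPDFReal_eq_one _ hv, mul_one]

set_option maxHeartbeats 2000000 in
lemma renyi_pi_gauss {k : ℕ} {v : ℝ≥0} (hv : v ≠ 0) (m m' : Fin k → ℝ) (α : ℝ) :
    renyiDiv α (Measure.pi fun t => gaussianReal (m t) v)
        (Measure.pi fun t => gaussianReal (m' t) v)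
      = (α - 1)⁻¹ * ∑ t, α * (α - 1) * (m t - m' t) ^ 2 / (2 * v) := by
  haveI : ∀ t : Fin k, SigmaFinite ((gaussianReal (m' t) v).withDensity
      (gaussRatio (m t) (m' t) v)) := fun t => by
    rw [gaussReal_withDensity_ratio _ _ hv]; infer_instance
  have h1 : (Measure.pi fun t => gaussianReal (m t) v)
      = (Measure.pi fun t => gaussianReal (m' t) v).withDensity
          (fun x => ∏ t, gaussRatio (m t) (m' t) v (x t)) := by
    rw [← my_pi_withDensity _ _ (fun t => measurable_gaussRatio (m t) (m' t) v)]
    exact congrArg Measure.pi (funext fun t => (gaussReal_withDensity_ratio _ _ hv).symm)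
  have hR : Measurable fun x : Fin k → ℝ => ∏ t, gaussRatio (m t) (m' t) v (x t) :=
    Finset.measurable_prod _ fun t _ =>
      (measurable_gaussRatio (m t) (m' t) v).comp (measurable_pi_apply t)
  have hrn := h1 ▸ Measure.rnDeriv_withDensity
    (Measure.pi fun t => gaussianReal (m' t) v) hR
  have hint : ∫ x, ((Measure.pi fun t => gaussianReal (m t) v).rnDeriv
        (Measure.pi fun t => gaussianReal (m' t) v) x).toReal ^ α
        ∂(Measure.pi fun t => gaussianReal (m' t) v)
      = rexp (∑ t, α * (α - 1) * (m t - m' t) ^ 2 / (2 * v)) := by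
    rw [integral_congr_ae (hrn.mono fun x hx => by rw [hx])]
    have hpt : ∀ x : Fin k → ℝ, (∏ t, gaussRatio (m t) (m' t) v (x t)).toReal ^ α
        = ∏ t, ((gaussRatio (m t) (m' t) v (x t)).toReal) ^ α := by
      intro x
      rw [ENNReal.toReal_prod]
      exact (Real.finset_prod_rpow _ _ (fun t _ => ENNReal.toReal_nonneg) α).symm
    rw [integral_congr_ae (Filter.Eventually.of_forall hpt),
      my_integral_pi_prod _ (fun t y => ((gaussRatio (m t) (m' t) v y).toReal) ^ α)]
    rw [Real.exp_sum]
    exact Finset.prod_congr rfl fun t _ => one_dim_integral (m t) (m' t) hv α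
  rw [renyiDiv, hint, Real.log_exp]

lemma sum_filter_le (g : ℕ → ℝ) (hg : ∀ t, 0 ≤ g t) (C : ℝ) (hC : 0 ≤ C) (k : ℕ) :
    ∑ t ∈ (Finset.range k).filter (fun t => ∑ j ∈ Finset.range (t + 1), g j ≤ C), g t ≤ C := by
  classical
  set A := (Finset.range k).filter (fun t => ∑ j ∈ Finset.range (t + 1), g j ≤ C) with hA
  rcases A.eq_empty_or_nonempty with h | h
  · rw [h]; simpa using hC
  · have hmax := A.max'_mem h
    have hsub : A ⊆ Finset.range (A.max' h + 1) := fun t ht =>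
      Finset.mem_range.mpr (Nat.lt_succ_of_le (A.le_max' t ht))
    calc ∑ t ∈ A, g t ≤ ∑ t ∈ Finset.range (A.max' h + 1), g t :=
          Finset.sum_le_sum_of_subset_of_nonneg hsub (fun t _ _ => hg t)
      _ ≤ C := (Finset.mem_filter.mp hmax).2

lemma filteredLaw_eq {𝒳 : Type*} {n : ℕ} (S : Fin n → 𝒳) (q : ℕ → 𝒳 → ℝ)
    (B α : ℝ) (σ : NNReal) (I : Finset (Fin n)) (k : ℕ) :
    filteredLaw S q B α σ I k
      = Measure.pi (fun t : Fin k => gaussianReal (filteredMean S q B α σ I t) (σ ^ 2)) := by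
  refine (Measure.pi_eq fun s hs => ?_).symm
  rw [filteredLaw, Measure.map_apply (measurable_pi_lambda _ fun t =>
    (measurable_pi_apply t).const_add _) (MeasurableSet.univ_pi hs)]
  have hpre : (fun (ξ : Fin k → ℝ) (t : Fin k) => filteredMean S q B α σ I t + ξ t) ⁻¹'
      Set.univ.pi s
      = Set.univ.pi fun t : Fin k => (fun x => filteredMean S q B α σ I (t : ℕ) + x) ⁻¹' s t := by
    ext ξ; simp [Set.mem_pi]
  rw [hpre, Measure.pi_pi]
  refine Finset.prod_congr rfl fun t _ => ?_
  have hmap := gaussianReal_map_const_add (μ := 0) (v := σ ^ 2)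
    (filteredMean S q B α σ I t)
  rw [zero_add] at hmap
  rw [← hmap, Measure.map_apply (measurable_const_add _) (hs t)]

open Classical in
lemma mean_diff {𝒳 : Type*} {n : ℕ} (S : Fin n → 𝒳) (q : ℕ → 𝒳 → ℝ)
    (B α : ℝ) (σ : NNReal) (i : Fin n) (t : ℕ) :
    filteredMean S q B α σ Finset.univ t - filteredMean S q B α σ (Finset.univ.erase i) t
      = if ∑ j ∈ Finset.range (t + 1), (q j (S i)) ^ 2 ≤ 2 * B * (σ : ℝ) ^ 2 / α then
          q t (S i) else 0 := by
  rw [filteredMean, filteredMean, Finset.filter_erase]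
  by_cases h : ∑ j ∈ Finset.range (t + 1), (q j (S i)) ^ 2 ≤ 2 * B * (σ : ℝ) ^ 2 / α
  · rw [if_pos h]
    have hi : i ∈ Finset.univ.filter (fun i => ∑ j ∈ Finset.range (t + 1), (q j (S i)) ^ 2
        ≤ 2 * B * (σ : ℝ) ^ 2 / α) := Finset.mem_filter.mpr ⟨Finset.mem_univ i, h⟩
    have := Finset.sum_erase_add _ (fun j => q t (S j)) hi
    linarith
  · have hi : i ∉ Finset.univ.filter (fun i => ∑ j ∈ Finset.range (t + 1), (q j (S i)) ^ 2
        ≤ 2 * B * (σ : ℝ) ^ 2 / α) := fun hc => h (Finset.mem_filter.mp hc).2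
    rw [if_neg h, Finset.erase_eq_of_notMem hi, sub_self]

/-- Non-adaptive composition with individual privacy filtering (Proposition 2.1):
with queries `q_t : 𝒳 → [0,1]` and reports `a_t = Σ_{X_i ∈ S_t} q_t(X_i) + N(0,σ²)` where
`S_t = {X_i : Σ_{j≤t} q_j(X_i)² ≤ 2Bσ²/α}`, the whole sequence of reports is
`(α,B)`-Rényi differentially private. -/
theorem nonadaptive_individual_filtering {𝒳 : Type*} {n : ℕ} (S : Fin n → 𝒳)
    (q : ℕ → 𝒳 → ℝ) (hq : ∀ t x, 0 ≤ q t x ∧ q t x ≤ 1)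
    (B : ℝ) (hB : 0 ≤ B) (α : ℝ) (hα : 1 < α) (σ : NNReal) (hσ : 0 < σ) (k : ℕ) :
    ∀ i : Fin n,
      renyiDiv α (filteredLaw S q B α σ Finset.univ k)
          (filteredLaw S q B α σ (Finset.univ.erase i) k) ≤ B ∧
      renyiDiv α (filteredLaw S q B α σ (Finset.univ.erase i) k)
          (filteredLaw S q B α σ Finset.univ k) ≤ B := by
  classical
  intro i
  have hσ2 : (σ ^ 2 : NNReal) ≠ 0 := pow_ne_zero 2 hσ.ne'
  have hα0 : (0:ℝ) < α := lt_trans one_pos hα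
  have hα1 : (0:ℝ) < α - 1 := sub_pos.mpr hα
  have hσ' : (0:ℝ) < (σ:ℝ) := hσ
  set m : Fin k → ℝ := fun t => filteredMean S q B α σ Finset.univ (t : ℕ) with hm
  set m' : Fin k → ℝ := fun t => filteredMean S q B α σ (Finset.univ.erase i) (t : ℕ) with hm'
  have hC : 0 ≤ 2 * B * (σ:ℝ) ^ 2 / α := by positivity
  have key : ∑ t : Fin k, (m t - m' t) ^ 2 ≤ 2 * B * (σ:ℝ) ^ 2 / α := by
    have heq : ∀ t : Fin k, (m t - m' t) ^ 2
        = if ∑ j ∈ Finset.range ((t:ℕ) + 1), (q j (S i)) ^ 2 ≤ 2 * B * (σ:ℝ) ^ 2 / α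
          then (q (t:ℕ) (S i)) ^ 2 else 0 := by
      intro t
      simp only [hm, hm']
      rw [mean_diff]
      split_ifs <;> simp
    calc ∑ t : Fin k, (m t - m' t) ^ 2
        = ∑ t ∈ Finset.range k, (if ∑ j ∈ Finset.range (t + 1), (q j (S i)) ^ 2
            ≤ 2 * B * (σ:ℝ) ^ 2 / α then (q t (S i)) ^ 2 else 0) := by
          rw [Finset.sum_congr rfl (fun t _ => heq t),
            Fin.sum_univ_eq_sum_range (fun t => if ∑ j ∈ Finset.range (t + 1), (q j (S i)) ^ 2
              ≤ 2 * B * (σ:ℝ) ^ 2 / α then (q t (S i)) ^ 2 else 0) k]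
      _ = ∑ t ∈ (Finset.range k).filter (fun t => ∑ j ∈ Finset.range (t + 1), (q j (S i)) ^ 2
            ≤ 2 * B * (σ:ℝ) ^ 2 / α), (q t (S i)) ^ 2 := (Finset.sum_filter _ _).symm
      _ ≤ _ := sum_filter_le (fun t => (q t (S i)) ^ 2) (fun t => sq_nonneg _) _ hC k
  have main : ∀ (a b : Fin k → ℝ), (∑ t : Fin k, (a t - b t) ^ 2 ≤ 2 * B * (σ:ℝ) ^ 2 / α) →
      renyiDiv α (Measure.pi fun t => gaussianReal (a t) (σ ^ 2))
        (Measure.pi fun t => gaussianReal (b t) (σ ^ 2)) ≤ B := by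
    intro a b hab
    rw [renyi_pi_gauss hσ2]
    have hcoe : (((σ ^ 2 : NNReal)) : ℝ) = (σ:ℝ) ^ 2 := by push_cast; ring
    have h2 : (α - 1)⁻¹ * ∑ t : Fin k, α * (α - 1) * (a t - b t) ^ 2 / (2 * ((σ ^ 2 : NNReal) : ℝ))
        = α / (2 * (σ:ℝ) ^ 2) * ∑ t : Fin k, (a t - b t) ^ 2 := by
      rw [hcoe, Finset.mul_sum, Finset.mul_sum]
      refine Finset.sum_congr rfl fun t _ => ?_
      field_simp
    rw [h2]
    calc α / (2 * (σ:ℝ) ^ 2) * ∑ t : Fin k, (a t - b t) ^ 2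
        ≤ α / (2 * (σ:ℝ) ^ 2) * (2 * B * (σ:ℝ) ^ 2 / α) :=
          mul_le_mul_of_nonneg_left hab (by positivity)
      _ = B := by field_simp
  have key' : ∑ t : Fin k, (m' t - m t) ^ 2 ≤ 2 * B * (σ:ℝ) ^ 2 / α := by
    have : ∀ t : Fin k, (m' t - m t) ^ 2 = (m t - m' t) ^ 2 := fun t => by ring
    rw [Finset.sum_congr rfl fun t _ => this t]
    exact key
  constructor
  · rw [filteredLaw_eq, filteredLaw_eq]
    exact main m m' key
  · rw [filteredLaw_eq, filteredLaw_eq]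
    exact main m' m key'
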